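/- Let g ≥ 1 be an integer and let Σ_g denote the genus-g surface group, i.e. the presented group with generators a₁, b₁, …, a_g, b_g and the single relator [a₁,b₁]·[a₂,b₂]⋯[a_g,b_g], where [x,y] = x·y·x⁻¹·y⁻¹. Let ℍ denote the real quaternions, ℍˣ its group of units, Z the center of ℍˣ, and π : ℍˣ → ℍˣ/Z the quotient homomorphism. Then: (1) there exists a group homomorphism ρ : Σ_g → ℍˣ/Z with ρ(a₁) = π(i), ρ(b₁) = π(j), and ρ(a_k) = ρ(b_k) = 1 for 2 ≤ k ≤ g; and (2) for any such ρ there is no group homomorphism ρ̃ : Σ_g → ℍˣ with π ∘ ρ̃ = ρ. -/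

import Mathlib

open scoped commutatorElement

/-- The single relator `[a₁,b₁]·[a₂,b₂]⋯[a_g,b_g]` of the genus-`g` surface group,
where the generator `aᵢ` is `Sum.inl i` and `bᵢ` is `Sum.inr i`. -/
def surfaceRelator (g : ℕ) : FreeGroup (Fin g ⊕ Fin g) :=
  (List.ofFn fun i : Fin g => ⁅FreeGroup.of (Sum.inl i : Fin g ⊕ Fin g), FreeGroup.of (Sum.inr i : Fin g ⊕ Fin g)⁆).prod

/-- The quaternion unit `i`, as an element of the group of units `ℍˣ`. -/
noncomputable def quatI : (Quaternion ℝ)ˣ :=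
  Units.mk0 (⟨0, 1, 0, 0⟩ : Quaternion ℝ) (by
    intro h; have := congrArg QuaternionAlgebra.imI h; exact one_ne_zero this)

/-- The quaternion unit `j`, as an element of the group of units `ℍˣ`. -/
noncomputable def quatJ : (Quaternion ℝ)ˣ :=
  Units.mk0 (⟨0, 0, 1, 0⟩ : Quaternion ℝ) (by
    intro h; have := congrArg QuaternionAlgebra.imJ h; exact one_ne_zero this)

@[simp] lemma quatI_re : ((quatI : (Quaternion ℝ)ˣ) : Quaternion ℝ).re = 0 := rfl
@[simp] lemma quatI_imI : ((quatI : (Quaternion ℝ)ˣ) : Quaternion ℝ).imI = 1 := rfl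
@[simp] lemma quatI_imJ : ((quatI : (Quaternion ℝ)ˣ) : Quaternion ℝ).imJ = 0 := rfl
@[simp] lemma quatI_imK : ((quatI : (Quaternion ℝ)ˣ) : Quaternion ℝ).imK = 0 := rfl
@[simp] lemma quatJ_re : ((quatJ : (Quaternion ℝ)ˣ) : Quaternion ℝ).re = 0 := rfl
@[simp] lemma quatJ_imI : ((quatJ : (Quaternion ℝ)ˣ) : Quaternion ℝ).imI = 0 := rfl
@[simp] lemma quatJ_imJ : ((quatJ : (Quaternion ℝ)ˣ) : Quaternion ℝ).imJ = 1 := rfl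
@[simp] lemma quatJ_imK : ((quatJ : (Quaternion ℝ)ˣ) : Quaternion ℝ).imK = 0 := rfl

lemma aux_prod_ofFn {M : Type*} [Monoid M] {g : ℕ} (hg : 1 ≤ g) (f : Fin g → M)
    (h : ∀ k : Fin g, k ≠ ⟨0, hg⟩ → f k = 1) : (List.ofFn f).prod = f ⟨0, hg⟩ := by
  obtain ⟨n, rfl⟩ : ∃ n, g = n + 1 := ⟨g - 1, by omega⟩
  rw [List.ofFn_succ, List.prod_cons]
  have h1 : (List.ofFn fun i : Fin n => f i.succ).prod = 1 := by
    apply List.prod_eq_one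
    intro x hx
    rw [List.mem_ofFn] at hx
    obtain ⟨i, rfl⟩ := hx
    exact h _ (by simp [Fin.ext_iff])
  rw [h1, mul_one]
  congr 1

lemma aux_map_relator {M : Type*} [Group M] {g : ℕ} (φ : FreeGroup (Fin g ⊕ Fin g) →* M) :
    φ (surfaceRelator g) = (List.ofFn fun i : Fin g =>
      ⁅φ (FreeGroup.of (Sum.inl i)), φ (FreeGroup.of (Sum.inr i))⁆).prod := by
  rw [surfaceRelator, map_list_prod, List.map_ofFn]
  exact congrArg (fun l => List.prod l)
    (congrArg List.ofFn (funext fun i => map_commutatorElement φ _ _))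

lemma quatI_mul_quatJ_ne : quatI * quatJ ≠ quatJ * quatI := by
  intro h
  rw [Units.ext_iff] at h
  simp only [Units.val_mul] at h
  rw [Quaternion.ext_iff] at h
  simp [Quaternion.re_mul, Quaternion.imI_mul, Quaternion.imJ_mul, Quaternion.imK_mul] at h
  exact absurd h (by norm_num)

lemma quatI_inv : quatI⁻¹ = -quatI := by
  apply inv_eq_of_mul_eq_one_right
  rw [Units.ext_iff]
  simp only [Units.val_mul, Units.val_neg, Units.val_one]
  rw [Quaternion.ext_iff]
  simp [Quaternion.re_mul, Quaternion.imI_mul, Quaternion.imJ_mul, Quaternion.imK_mul,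
    Quaternion.re_one, Quaternion.imI_one, Quaternion.imJ_one, Quaternion.imK_one]

lemma quatJ_inv : quatJ⁻¹ = -quatJ := by
  apply inv_eq_of_mul_eq_one_right
  rw [Units.ext_iff]
  simp only [Units.val_mul, Units.val_neg, Units.val_one]
  rw [Quaternion.ext_iff]
  simp [Quaternion.re_mul, Quaternion.imI_mul, Quaternion.imJ_mul, Quaternion.imK_mul,
    Quaternion.re_one, Quaternion.imI_one, Quaternion.imJ_one, Quaternion.imK_one]

lemma comm_IJ : ⁅quatI, quatJ⁆ = -1 := by
  rw [commutatorElement_def, quatI_inv, quatJ_inv, Units.ext_iff]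
  simp only [Units.val_mul, Units.val_neg, Units.val_one]
  rw [Quaternion.ext_iff]
  simp [Quaternion.re_mul, Quaternion.imI_mul, Quaternion.imJ_mul, Quaternion.imK_mul,
    Quaternion.re_one, Quaternion.imI_one, Quaternion.imJ_one, Quaternion.imK_one]

lemma neg_one_mem_center : (-1 : (Quaternion ℝ)ˣ) ∈ Subgroup.center (Quaternion ℝ)ˣ := by
  rw [Subgroup.mem_center_iff]
  intro a
  rw [mul_neg_one, neg_one_mul]

/-- there is a homomorphism `ρ` from the genus-`g` surface group
(`g ≥ 1`) to `ℍˣ/Z(ℍˣ)` with `ρ(a₁) = π(i)`, `ρ(b₁) = π(j)` and `ρ(a_k) = ρ(b_k) = 1`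
for `k ≥ 2`; and no such `ρ` lifts to a homomorphism into `ℍˣ`. -/
theorem stmt6 (g : ℕ) (hg : 1 ≤ g) :
    (∃ ρ : PresentedGroup {surfaceRelator g} →*
        ((Quaternion ℝ)ˣ ⧸ Subgroup.center (Quaternion ℝ)ˣ),
      ρ (PresentedGroup.of (Sum.inl (⟨0, hg⟩ : Fin g))) =
          QuotientGroup.mk' (Subgroup.center (Quaternion ℝ)ˣ) quatI ∧
      ρ (PresentedGroup.of (Sum.inr (⟨0, hg⟩ : Fin g))) =
          QuotientGroup.mk' (Subgroup.center (Quaternion ℝ)ˣ) quatJ ∧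
      ∀ k : Fin g, k ≠ ⟨0, hg⟩ →
        ρ (PresentedGroup.of (Sum.inl k)) = 1 ∧
        ρ (PresentedGroup.of (Sum.inr k)) = 1) ∧
    (∀ ρ : PresentedGroup {surfaceRelator g} →*
        ((Quaternion ℝ)ˣ ⧸ Subgroup.center (Quaternion ℝ)ˣ),
      (ρ (PresentedGroup.of (Sum.inl (⟨0, hg⟩ : Fin g))) =
          QuotientGroup.mk' (Subgroup.center (Quaternion ℝ)ˣ) quatI ∧
       ρ (PresentedGroup.of (Sum.inr (⟨0, hg⟩ : Fin g))) =
          QuotientGroup.mk' (Subgroup.center (Quaternion ℝ)ˣ) quatJ ∧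
       ∀ k : Fin g, k ≠ ⟨0, hg⟩ →
         ρ (PresentedGroup.of (Sum.inl k)) = 1 ∧
         ρ (PresentedGroup.of (Sum.inr k)) = 1) →
      ¬ ∃ ρ' : PresentedGroup {surfaceRelator g} →* (Quaternion ℝ)ˣ,
          (QuotientGroup.mk' (Subgroup.center (Quaternion ℝ)ˣ)).comp ρ' = ρ) := by
  set Z := Subgroup.center (Quaternion ℝ)ˣ with hZ
  set π : (Quaternion ℝ)ˣ →* ((Quaternion ℝ)ˣ ⧸ Z) := QuotientGroup.mk' Z with hπ
  constructor
  · -- Existence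
    set f : Fin g ⊕ Fin g → ((Quaternion ℝ)ˣ ⧸ Z) :=
      Sum.elim (fun k => if k = ⟨0, hg⟩ then π quatI else 1)
        (fun k => if k = ⟨0, hg⟩ then π quatJ else 1) with hf
    have hrel : ∀ r ∈ ({surfaceRelator g} : Set (FreeGroup (Fin g ⊕ Fin g))),
        FreeGroup.lift f r = 1 := by
      intro r hr
      rw [Set.mem_singleton_iff] at hr
      subst hr
      rw [aux_map_relator (FreeGroup.lift f), aux_prod_ofFn hg]
      · have e1 : f (Sum.inl ⟨0, hg⟩) = π quatI := by simp [hf]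
        have e2 : f (Sum.inr ⟨0, hg⟩) = π quatJ := by simp [hf]
        rw [FreeGroup.lift_apply_of, FreeGroup.lift_apply_of, e1, e2, ← map_commutatorElement, comm_IJ]
        exact (QuotientGroup.eq_one_iff _).mpr neg_one_mem_center
      · intro k hk
        simp only [FreeGroup.lift_apply_of, hf, Sum.elim_inl, Sum.elim_inr, if_neg hk]
        exact commutatorElement_eq_one_iff_commute.mpr (Commute.one_left _)
    refine ⟨PresentedGroup.toGroup hrel, ?_, ?_, ?_⟩
    · rw [PresentedGroup.toGroup.of]; simp [hf]
    · rw [PresentedGroup.toGroup.of]; simp [hf]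
    · intro k hk
      constructor <;> rw [PresentedGroup.toGroup.of] <;> simp [hf, hk]
  · -- Non-lifting
    rintro ρ ⟨h1, h2, h3⟩ ⟨ρ', hcomp⟩
    have hπρ' : ∀ p, π (ρ' p) = ρ p := fun p => DFunLike.congr_fun hcomp p
    set mkh : FreeGroup (Fin g ⊕ Fin g) →* PresentedGroup {surfaceRelator g} :=
      QuotientGroup.mk' (Subgroup.normalClosure {surfaceRelator g}) with hmkh
    set φ : FreeGroup (Fin g ⊕ Fin g) →* (Quaternion ℝ)ˣ := ρ'.comp mkh with hφ
    have hφ1 : φ (surfaceRelator g) = 1 := by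
      have h0 : mkh (surfaceRelator g) = 1 :=
        (QuotientGroup.eq_one_iff _).mpr (Subgroup.subset_normalClosure rfl)
      rw [hφ, MonoidHom.comp_apply, h0, map_one]
    have hφof : ∀ x, φ (FreeGroup.of x) = ρ' (PresentedGroup.of x) := fun x => rfl
    set A := ρ' (PresentedGroup.of (Sum.inl (⟨0, hg⟩ : Fin g))) with hA
    set B := ρ' (PresentedGroup.of (Sum.inr (⟨0, hg⟩ : Fin g))) with hB
    have hAB : ⁅A, B⁆ = 1 := by
      rw [← hφ1, aux_map_relator φ, aux_prod_ofFn hg]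
      · rw [hφof, hφof]
      · intro k hk
        have hAk : ρ' (PresentedGroup.of (Sum.inl k)) ∈ Z := by
          have hh : π (ρ' (PresentedGroup.of (Sum.inl k))) = 1 := by
            rw [hπρ']; exact (h3 k hk).1
          exact (QuotientGroup.ker_mk' Z) ▸ MonoidHom.mem_ker.mpr hh
        rw [hφof, hφof]
        exact commutatorElement_eq_one_iff_commute.mpr
          ((Subgroup.mem_center_iff.mp hAk _).symm)
    have hcomm : Commute A B := commutatorElement_eq_one_iff_commute.mp hAB
    have hπA : π A = π quatI := by rw [hπρ']; exact h1
    have hπB : π B = π quatJ := by rw [hπρ']; exact h2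
    obtain ⟨c, hc_mem, hc⟩ := (QuotientGroup.mk'_eq_mk' Z).mp hπA
    obtain ⟨d, hd_mem, hd⟩ := (QuotientGroup.mk'_eq_mk' Z).mp hπB
    -- hc : A * c = quatI, hd : B * d = quatJ
    apply quatI_mul_quatJ_ne
    have HcB : Commute c B := ((Subgroup.mem_center_iff.mp hc_mem) B).symm
    have HdA : Commute d A := ((Subgroup.mem_center_iff.mp hd_mem) A).symm
    calc quatI * quatJ = A * c * (B * d) := by rw [hc, hd]
      _ = A * B * (c * d) := HcB.mul_mul_mul_comm A d
      _ = B * A * (d * c) := by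
          rw [hcomm.eq, ((Subgroup.mem_center_iff.mp hc_mem) d).symm]
      _ = B * d * (A * c) := (HdA.mul_mul_mul_comm B c).symm
      _ = quatJ * quatI := by rw [hc, hd]
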